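/- Let d, n ∈ ℕ, R > 0, ξ > 0, γ ∈ (0,1), and consider the hardmax self-attention dynamics with parameter matrix A = ξ I_d. Suppose the initial configuration x_1(0), …, x_n(0) ∈ ℝ^d is such that for a unique index i* ∈ {1,…,n}: x_{i*}(0) = R·1_d (the vector with all coordinates equal to R) and x_i(0) ∈ (0,R)^d for all i ≠ i*. Then for every i ∈ {1,…,n} and every k ≥ 0, ‖x_i(k) − x_{i*}(0)‖ ≤ (1−γ)^k ‖x_i(0) − x_{i*}(0)‖, where ‖·‖ is the Euclidean norm. -/

import Mathlib

open Filter Topology Matrix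

open Classical in
/-- Hardmax cluster set: indices `j` where `⟨A x_i, x_j⟩` attains its maximum over the tuple. -/
noncomputable def cluster {d n : ℕ} (X : Fin n → (Fin d → ℝ))
    (A : Matrix (Fin d) (Fin d) ℝ) (i : Fin n) : Finset (Fin n) :=
  Finset.univ.filter fun j => ∀ ℓ, A.mulVec (X i) ⬝ᵥ X ℓ ≤ A.mulVec (X i) ⬝ᵥ X j

/-- Hardmax self-attention dynamics:
`x_i(k+1) = (1−γ) x_i(k) + (γ/|C_i(X(k),A)|) Σ_{ℓ ∈ C_i(X(k),A)} x_ℓ(k)`. -/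
noncomputable def traj {d n : ℕ} (γ : ℝ) (A : Matrix (Fin d) (Fin d) ℝ)
    (X0 : Fin n → (Fin d → ℝ)) : ℕ → Fin n → (Fin d → ℝ)
  | 0 => X0
  | k + 1 => fun i =>
      (1 - γ) • traj γ A X0 k i +
        (γ / ((cluster (traj γ A X0 k) A i).card : ℝ)) •
          ∑ ℓ ∈ cluster (traj γ A X0 k) A i, traj γ A X0 k ℓ

/-- Euclidean norm on `ℝ^d` (viewed as `Fin d → ℝ`). -/
noncomputable def enorm {d : ℕ} (x : Fin d → ℝ) : ℝ :=
  Real.sqrt (∑ t, x t ^ 2)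

lemma enorm_smul' {d : ℕ} (c : ℝ) (x : Fin d → ℝ) : _root_.enorm (c • x) = |c| * _root_.enorm x := by
  unfold _root_.enorm
  rw [← Real.sqrt_sq_eq_abs, ← Real.sqrt_mul (sq_nonneg c), Finset.mul_sum]
  exact congrArg Real.sqrt (Finset.sum_congr rfl fun t _ => by simp [mul_pow])

lemma dot_scaled {d n : ℕ} (ξ : ℝ) (X : Fin n → Fin d → ℝ) (i j : Fin n) :
    (ξ • (1 : Matrix (Fin d) (Fin d) ℝ)).mulVec (X i) ⬝ᵥ X j = ξ * ∑ t, X i t * X j t := by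
  rw [Matrix.smul_mulVec, Matrix.one_mulVec, smul_dotProduct]
  rfl

lemma cluster_single {d n : ℕ} [NeZero d] (ξ R : ℝ) (hξ : 0 < ξ) (X : Fin n → Fin d → ℝ)
    (istar : Fin n) (hstar : X istar = fun _ => R)
    (hlt : ∀ j, j ≠ istar → ∀ t, X j t < R)
    (i : Fin n) (hpos : ∀ t, 0 < X i t) :
    cluster X (ξ • (1 : Matrix (Fin d) (Fin d) ℝ)) i = {istar} := by
  have key : ∀ j, j ≠ istar →
      (ξ • (1 : Matrix (Fin d) (Fin d) ℝ)).mulVec (X i) ⬝ᵥ X j <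
      (ξ • (1 : Matrix (Fin d) (Fin d) ℝ)).mulVec (X i) ⬝ᵥ X istar := by
    intro j hj
    rw [dot_scaled, dot_scaled]
    apply mul_lt_mul_of_pos_left _ hξ
    apply Finset.sum_lt_sum_of_nonempty Finset.univ_nonempty
    intro t _
    rw [hstar]
    exact mul_lt_mul_of_pos_left (hlt j hj t) (hpos t)
  ext j
  simp only [cluster, Finset.mem_filter, Finset.mem_univ, true_and, Finset.mem_singleton]
  constructor
  · intro h
    by_contra hj
    exact absurd (h istar) (not_le.mpr (key j hj))
  · intro hj ℓ
    rw [hj]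
    by_cases hℓ : ℓ = istar
    · rw [hℓ]
    · exact (key ℓ hℓ).le

/-- **Quantitative full clustering** for hardmax self-attention dynamics with `A = ξ I_d`
and `γ ∈ (0,1)`: every token approaches the corner token geometrically,
`‖x_i(k) − x_{i*}(0)‖ ≤ (1−γ)^k ‖x_i(0) − x_{i*}(0)‖`. -/
theorem full_clustering_rate {d n : ℕ} (R ξ γ : ℝ) (hR : 0 < R) (hξ : 0 < ξ)
    (hγ0 : 0 < γ) (hγ1 : γ < 1)
    (X0 : Fin n → (Fin d → ℝ)) (istar : Fin n)
    (hstar : X0 istar = fun _ => R)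
    (hcube : ∀ i, i ≠ istar → ∀ t, 0 < X0 i t ∧ X0 i t < R) :
    ∀ i, ∀ k : ℕ,
      _root_.enorm (traj γ (ξ • (1 : Matrix (Fin d) (Fin d) ℝ)) X0 k i - X0 istar) ≤
        (1 - γ) ^ k * _root_.enorm (X0 i - X0 istar) := by
  intro i k
  have hγk : (0:ℝ) ≤ (1 - γ) ^ k := pow_nonneg (by linarith) _
  by_cases hd : d = 0
  · subst hd
    have h1 : _root_.enorm (traj γ (ξ • (1 : Matrix (Fin 0) (Fin 0) ℝ)) X0 k i - X0 istar) = 0 := by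
      simp [_root_.enorm]
    rw [h1]
    exact mul_nonneg hγk (Real.sqrt_nonneg _)
  · haveI : NeZero d := ⟨hd⟩
    set A := ξ • (1 : Matrix (Fin d) (Fin d) ℝ) with hA
    have Inv : ∀ m : ℕ, traj γ A X0 m istar = (fun _ => R) ∧
        (∀ j, j ≠ istar → ∀ t, 0 < traj γ A X0 m j t ∧ traj γ A X0 m j t < R) ∧
        (∀ j, traj γ A X0 m j - X0 istar = ((1 - γ) ^ m) • (X0 j - X0 istar)) := by
      intro m
      induction m with
      | zero => exact ⟨hstar, hcube, fun j => by simp [traj]⟩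
      | succ m ih =>
        obtain ⟨h1, h2, h3⟩ := ih
        have hpos : ∀ j t, 0 < traj γ A X0 m j t := by
          intro j t
          by_cases hj : j = istar
          · rw [hj, h1]; exact hR
          · exact (h2 j hj t).1
        have hcl : ∀ j, cluster (traj γ A X0 m) A j = {istar} := fun j =>
          cluster_single ξ R hξ _ istar h1 (fun j hj t => (h2 j hj t).2) j (hpos j)
        have hstep : ∀ j, traj γ A X0 (m + 1) j
            = (1 - γ) • traj γ A X0 m j + γ • (fun _ => R) := by
          intro j
          show (1 - γ) • _ + _ • _ = _
          rw [hcl j]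
          simp [h1]
        have hγm : (0:ℝ) ≤ (1 - γ) ^ m := pow_nonneg (by linarith) _
        refine ⟨?_, ?_, ?_⟩
        · rw [hstep istar, h1]
          funext t
          simp only [Pi.add_apply, Pi.smul_apply, smul_eq_mul]
          ring
        · intro j hj t
          rw [hstep j]
          have hb := h2 j hj t
          simp only [Pi.add_apply, Pi.smul_apply, smul_eq_mul]
          constructor
          · nlinarith [hb.1]
          · nlinarith [hb.2]
        · intro j
          rw [hstep j, hstar]
          funext t
          have h3t := congrFun (h3 j) t
          simp only [Pi.sub_apply, Pi.smul_apply, smul_eq_mul, hstar] at h3t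
          simp only [Pi.add_apply, Pi.sub_apply, Pi.smul_apply, smul_eq_mul, pow_succ]
          nlinarith [h3t]
    have h3 := (Inv k).2.2 i
    rw [h3, enorm_smul', abs_of_nonneg hγk]
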